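/- Let V be a real inner product space, let p ≥ 2 be an integer, and let ξ₁, …, ξ_p ∈ V. Let δ > 0 and ε ≥ 0 be real numbers with (p − 1)·ε < δ². Assume ‖ξ_i‖ ≥ δ for every 1 ≤ i ≤ p and |⟨ξ_i, ξ_j⟩| ≤ ε for all i ≠ j. Then for all real numbers λ₁, …, λ_p one has (δ² − (p − 1)·ε) · Σ_{j=1}^p |λ_j| ≤ Σ_{j=1}^p |⟨ Σ_{i=1}^p λ_i ξ_i , ξ_j ⟩|. In particular, Σ_{j=1}^p |λ_j| ≤ (Σ_{j=1}^p |α_j|)/(δ² − (p − 1)ε) whenever ⟨ Σ_i λ_i ξ_i , ξ_j ⟩ = α_j for every j. -/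

import Mathlib

/-- Quantitative estimate behind Lemma 5.3: for almost-orthogonal vectors
`ξ₁, …, ξ_p` in a real inner product space, one has
`(δ² − (p−1)ε) · Σ |λ_j| ≤ Σ |⟨Σ λ_i ξ_i, ξ_j⟩|`; in particular, if
`⟨Σ λ_i ξ_i, ξ_j⟩ = α_j` for every `j`, then
`Σ |λ_j| ≤ (Σ |α_j|) / (δ² − (p−1)ε)`. -/
theorem almost_orthogonal_coeff_bound
    {V : Type*} [NormedAddCommGroup V] [InnerProductSpace ℝ V]
    (p : ℕ) (hp : 2 ≤ p) (ξ : Fin p → V) (δ ε : ℝ)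
    (hδ : 0 < δ) (hε : 0 ≤ ε)
    (hεδ : ((p : ℝ) - 1) * ε < δ ^ 2)
    (hnorm : ∀ i : Fin p, δ ≤ ‖ξ i‖)
    (hinner : ∀ i j : Fin p, i ≠ j → |(inner ℝ (ξ i) (ξ j) : ℝ)| ≤ ε) :
    ∀ lam : Fin p → ℝ,
      (δ ^ 2 - ((p : ℝ) - 1) * ε) * ∑ j, |lam j|
        ≤ ∑ j, |(inner ℝ (∑ i, lam i • ξ i) (ξ j) : ℝ)| ∧
      ∀ α : Fin p → ℝ,
        (∀ j, (inner ℝ (∑ i, lam i • ξ i) (ξ j) : ℝ) = α j) →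
        ∑ j, |lam j| ≤ (∑ j, |α j|) / (δ ^ 2 - ((p : ℝ) - 1) * ε) := by
  intro lam
  have hpos : 0 < δ ^ 2 - ((p : ℝ) - 1) * ε := by linarith
  have hexp : ∀ j : Fin p, (inner ℝ (∑ i, lam i • ξ i) (ξ j) : ℝ)
      = ∑ i, lam i * (inner ℝ (ξ i) (ξ j) : ℝ) := by
    intro j
    rw [sum_inner]
    simp [real_inner_smul_left]
  have key : ∀ j : Fin p,
      δ ^ 2 * |lam j| - ε * ∑ i ∈ Finset.univ.erase j, |lam i|
        ≤ |(inner ℝ (∑ i, lam i • ξ i) (ξ j) : ℝ)| := by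
    intro j
    rw [hexp j]
    rw [← Finset.add_sum_erase _ _ (Finset.mem_univ j)]
    have h1 : δ ^ 2 * |lam j| ≤ |lam j * (inner ℝ (ξ j) (ξ j) : ℝ)| := by
      rw [abs_mul, mul_comm]
      apply mul_le_mul_of_nonneg_left _ (abs_nonneg _)
      rw [real_inner_self_eq_norm_sq, abs_of_nonneg (by positivity)]
      exact pow_le_pow_left₀ hδ.le (hnorm j) 2
    have h2 : |∑ i ∈ Finset.univ.erase j, lam i * (inner ℝ (ξ i) (ξ j) : ℝ)|
        ≤ ε * ∑ i ∈ Finset.univ.erase j, |lam i| := by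
      calc |∑ i ∈ Finset.univ.erase j, lam i * (inner ℝ (ξ i) (ξ j) : ℝ)|
          ≤ ∑ i ∈ Finset.univ.erase j, |lam i * (inner ℝ (ξ i) (ξ j) : ℝ)| :=
            Finset.abs_sum_le_sum_abs _ _
        _ ≤ ∑ i ∈ Finset.univ.erase j, |lam i| * ε := by
            apply Finset.sum_le_sum
            intro i hi
            rw [abs_mul]
            exact mul_le_mul_of_nonneg_left
              (hinner i j (Finset.ne_of_mem_erase hi)) (abs_nonneg _)
        _ = ε * ∑ i ∈ Finset.univ.erase j, |lam i| := by
            rw [Finset.mul_sum]; simp [mul_comm]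
    calc δ ^ 2 * |lam j| - ε * ∑ i ∈ Finset.univ.erase j, |lam i|
        ≤ |lam j * (inner ℝ (ξ j) (ξ j) : ℝ)|
            - |∑ i ∈ Finset.univ.erase j, lam i * (inner ℝ (ξ i) (ξ j) : ℝ)| := by
          linarith
      _ ≤ |lam j * (inner ℝ (ξ j) (ξ j) : ℝ)
            + ∑ i ∈ Finset.univ.erase j, lam i * (inner ℝ (ξ i) (ξ j) : ℝ)| := by
          have := abs_add_le (lam j * (inner ℝ (ξ j) (ξ j) : ℝ)
            + ∑ i ∈ Finset.univ.erase j, lam i * (inner ℝ (ξ i) (ξ j) : ℝ))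
            (-(∑ i ∈ Finset.univ.erase j, lam i * (inner ℝ (ξ i) (ξ j) : ℝ)))
          simp only [add_neg_cancel_right, abs_neg] at this
          linarith
  have hsum : (δ ^ 2 - ((p : ℝ) - 1) * ε) * ∑ j, |lam j|
      ≤ ∑ j, |(inner ℝ (∑ i, lam i • ξ i) (ξ j) : ℝ)| := by
    have : ∑ j, (δ ^ 2 * |lam j| - ε * ∑ i ∈ Finset.univ.erase j, |lam i|)
        ≤ ∑ j, |(inner ℝ (∑ i, lam i • ξ i) (ξ j) : ℝ)| :=
      Finset.sum_le_sum (fun j _ => key j)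
    have herase : ∀ j : Fin p, ∑ i ∈ Finset.univ.erase j, |lam i|
        = (∑ i, |lam i|) - |lam j| := by
      intro j
      rw [← Finset.add_sum_erase _ _ (Finset.mem_univ j)]
      ring
    have hls : ∑ j, (δ ^ 2 * |lam j| - ε * ∑ i ∈ Finset.univ.erase j, |lam i|)
        = (δ ^ 2 - ((p : ℝ) - 1) * ε) * ∑ j, |lam j| := by
      simp only [herase, mul_sub, Finset.sum_sub_distrib, ← Finset.mul_sum,
        Finset.sum_const, Finset.card_univ, Fintype.card_fin, nsmul_eq_mul]
      ring
    linarith [hls ▸ this]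
  refine ⟨hsum, fun α hα => ?_⟩
  rw [le_div_iff₀ hpos]
  calc (∑ j, |lam j|) * (δ ^ 2 - ((p : ℝ) - 1) * ε)
      = (δ ^ 2 - ((p : ℝ) - 1) * ε) * ∑ j, |lam j| := by ring
    _ ≤ ∑ j, |(inner ℝ (∑ i, lam i • ξ i) (ξ j) : ℝ)| := hsum
    _ = ∑ j, |α j| := by simp [hα]
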